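/- The subgroup 𝒢₁ = ⟨P, S⟩ of the symmetric group on 15 elements generated by P and S is isomorphic (as a group) to the alternating group A₅ on 5 letters. -/

import Mathlib

/-- P = (1 2 3 4 5)(6 7 8 9 10)(11 12 13 14 15); the label 15 corresponds to (15 : Fin 15) = 0. -/
def P : Equiv.Perm (Fin 15) :=
  c[(1 : Fin 15), 2, 3, 4, 5] * c[(6 : Fin 15), 7, 8, 9, 10] * c[(11 : Fin 15), 12, 13, 14, 15]

/-- T = (3 10)(4 14)(5 8)(6 11)(7 12)(13 15). -/
def T : Equiv.Perm (Fin 15) :=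
  c[(3 : Fin 15), 10] * c[(4 : Fin 15), 14] * c[(5 : Fin 15), 8] * c[(6 : Fin 15), 11] *
    c[(7 : Fin 15), 12] * c[(13 : Fin 15), 15]

/-- S = (1 6 11)(2 15 14)(3 13 8)(4 7 5)(9 12 10). -/
def S : Equiv.Perm (Fin 15) :=
  c[(1 : Fin 15), 6, 11] * c[(2 : Fin 15), 15, 14] * c[(3 : Fin 15), 13, 8] *
    c[(4 : Fin 15), 7, 5] * c[(9 : Fin 15), 12, 10]

/-- R = (2 5)(3 4)(7 10)(8 9)(12 15)(13 14). -/
def R : Equiv.Perm (Fin 15) :=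
  c[(2 : Fin 15), 5] * c[(3 : Fin 15), 4] * c[(7 : Fin 15), 10] * c[(8 : Fin 15), 9] *
    c[(12 : Fin 15), 15] * c[(13 : Fin 15), 14]

/-- U = (1 6 11)(2 7 12)(3 8 13)(4 9 14)(5 10 15). -/
def U : Equiv.Perm (Fin 15) :=
  c[(1 : Fin 15), 6, 11] * c[(2 : Fin 15), 7, 12] * c[(3 : Fin 15), 8, 13] *
    c[(4 : Fin 15), 9, 14] * c[(5 : Fin 15), 10, 15]


namespace G1A5Aux

open Equiv Equiv.Perm Subgroup

def p5 : Equiv.Perm (Fin 5) := c[(0 : Fin 5), 1, 2, 3, 4]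
def s5 : Equiv.Perm (Fin 5) := c[(1 : Fin 5), 4, 2]

def mu : Fin 15 → Equiv.Perm (Fin 5) :=
  ![c[(0 : Fin 5), 3] * c[(1 : Fin 5), 4],
    c[(0 : Fin 5), 1] * c[(2 : Fin 5), 4],
    c[(0 : Fin 5), 3] * c[(1 : Fin 5), 2],
    c[(1 : Fin 5), 4] * c[(2 : Fin 5), 3],
    c[(0 : Fin 5), 2] * c[(3 : Fin 5), 4],
    c[(0 : Fin 5), 4] * c[(1 : Fin 5), 3],
    c[(0 : Fin 5), 4] * c[(1 : Fin 5), 2],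
    c[(0 : Fin 5), 1] * c[(2 : Fin 5), 3],
    c[(1 : Fin 5), 2] * c[(3 : Fin 5), 4],
    c[(0 : Fin 5), 4] * c[(2 : Fin 5), 3],
    c[(0 : Fin 5), 1] * c[(3 : Fin 5), 4],
    c[(0 : Fin 5), 2] * c[(1 : Fin 5), 4],
    c[(0 : Fin 5), 2] * c[(1 : Fin 5), 3],
    c[(1 : Fin 5), 3] * c[(2 : Fin 5), 4],
    c[(0 : Fin 5), 3] * c[(2 : Fin 5), 4]]

def ee : Fin 15 → Fin 5 := ![2, 3, 4, 0, 1, 2, 3, 4, 0, 1, 2, 3, 4, 0, 1]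

/-- The subgroup of pairs acting compatibly on the two "geometries". -/
def E : Subgroup (Equiv.Perm (Fin 15) × Equiv.Perm (Fin 5)) where
  carrier := {a | (∀ i, mu (a.1 i) = a.2 * mu i * a.2⁻¹) ∧ (∀ i, ee (a.1 i) = a.2 (ee i))}
  one_mem' := by
    constructor <;> intro i <;> simp
  mul_mem' := by
    rintro a b ⟨ha1, ha2⟩ ⟨hb1, hb2⟩
    constructor <;> intro i
    · have : (a.1 * b.1) i = a.1 (b.1 i) := rfl
      rw [Prod.fst_mul, Prod.snd_mul, this, ha1, hb1]
      simp [mul_assoc]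
    · have : (a.1 * b.1) i = a.1 (b.1 i) := rfl
      rw [Prod.fst_mul, Prod.snd_mul, this, ha2, hb2]
      rfl
  inv_mem' := by
    rintro a ⟨ha1, ha2⟩
    constructor <;> intro i
    · have h := ha1 (a.1⁻¹ i)
      rw [show a.1 (a.1⁻¹ i) = i from Equiv.apply_symm_apply _ _] at h
      rw [Prod.fst_inv, Prod.snd_inv, h]
      group
    · have h := ha2 (a.1⁻¹ i)
      rw [show a.1 (a.1⁻¹ i) = i from Equiv.apply_symm_apply _ _] at h
      rw [Prod.fst_inv, Prod.snd_inv, h, show ∀ (e : Equiv.Perm (Fin 5)) x, e⁻¹ (e x) = x from fun e x => Equiv.symm_apply_apply e x]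

def K : Subgroup (Equiv.Perm (Fin 15) × Equiv.Perm (Fin 5)) :=
  Subgroup.closure {(P, p5), (S, s5)}

lemma hPE : (P, p5) ∈ E := by
  constructor <;> decide

lemma hSE : (S, s5) ∈ E := by
  constructor <;> decide

lemma hKE : K ≤ E := by
  rw [K, Subgroup.closure_le]
  rintro x (rfl | rfl)
  · exact hPE
  · exact hSE

def f1 : K →* Equiv.Perm (Fin 15) := (MonoidHom.fst _ _).comp K.subtype
def f2 : K →* Equiv.Perm (Fin 5) := (MonoidHom.snd _ _).comp K.subtype

lemma ee_surj : ∀ j : Fin 5, ∃ i : Fin 15, ee i = j := by decide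

lemma mu_inj : Function.Injective mu := by decide

lemma hinj1 : Function.Injective f1 := by
  rw [injective_iff_map_eq_one]
  rintro ⟨a, ha⟩ h1
  have hE := hKE ha
  have h1' : a.1 = 1 := h1
  have h2 : ∀ i, ee i = a.2 (ee i) := by
    intro i
    have := hE.2 i
    rwa [h1', Equiv.Perm.one_apply] at this
  have ha2 : a.2 = 1 := Equiv.ext fun j => by
    obtain ⟨i, rfl⟩ := ee_surj j
    exact (h2 i).symm
  ext : 1
  rw [Subgroup.coe_one, Prod.ext_iff]
  exact ⟨h1', ha2⟩

lemma hinj2 : Function.Injective f2 := by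
  rw [injective_iff_map_eq_one]
  rintro ⟨a, ha⟩ h2
  have hE := hKE ha
  have h2' : a.2 = 1 := h2
  have h1 : ∀ i, mu (a.1 i) = mu i := by
    intro i
    have := hE.1 i
    rwa [h2', one_mul, inv_one, mul_one] at this
  have ha1 : a.1 = 1 := Equiv.ext fun i => mu_inj (h1 i)
  ext : 1
  rw [Subgroup.coe_one, Prod.ext_iff]
  exact ⟨ha1, h2'⟩

lemma hr1 : f1.range = Subgroup.closure {P, S} := by
  rw [f1, MonoidHom.range_comp, Subgroup.range_subtype, K, MonoidHom.map_closure,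
    Set.image_pair]
  rfl

lemma hr2 : f2.range = Subgroup.closure {p5, s5} := by
  rw [f2, MonoidHom.range_comp, Subgroup.range_subtype, K, MonoidHom.map_closure,
    Set.image_pair]
  rfl

def wprod (w : List Bool) : Equiv.Perm (Fin 5) :=
  (w.map fun b => if b then p5 else s5).prod

def words : List (List Bool) := [
  [],
  [true],
  [false],
  [true, true],
  [true, false],
  [false, true],
  [false, false],
  [true, true, true],
  [true, true, false],
  [true, false, false],
  [false, true, true],
  [false, true, false],
  [false, false, true],
  [true, true, true, false],
  [true, true, false, false],
  [true, false, false, true],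
  [false, true, true, true],
  [false, true, true, false],
  [false, true, false, false],
  [false, false, true, true],
  [false, false, true, false],
  [true, true, true, false, false],
  [true, true, false, false, true],
  [true, false, false, true, true],
  [true, false, false, true, false],
  [false, true, true, true, false],
  [false, true, true, false, false],
  [false, false, true, true, false],
  [false, false, true, false, false],
  [true, true, true, false, false, true],
  [true, true, false, false, true, true],
  [true, true, false, false, true, false],
  [true, false, false, true, true, false],
  [true, false, false, true, false, false],
  [false, true, true, true, false, false],
  [false, true, true, false, false, true],
  [false, false, true, true, false, false],
  [true, true, true, false, false, true, true],
  [true, true, true, false, false, true, false],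
  [true, true, false, false, true, true, false],
  [true, true, false, false, true, false, false],
  [true, false, false, true, true, false, false],
  [false, true, true, true, false, false, true],
  [false, true, true, false, false, true, true],
  [false, false, true, true, false, false, true],
  [true, true, true, false, false, true, true, false],
  [true, true, true, false, false, true, false, false],
  [true, true, false, false, true, true, false, false],
  [true, false, false, true, true, false, false, true],
  [false, true, true, true, false, false, true, true],
  [false, true, true, true, false, false, true, false],
  [false, true, true, false, false, true, true, false],
  [false, false, true, true, false, false, true, true],
  [true, true, false, false, true, true, false, false, true],
  [true, false, false, true, true, false, false, true, true],
  [false, true, true, true, false, false, true, true, false],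
  [false, true, true, true, false, false, true, false, false],
  [false, true, true, false, false, true, true, false, false],
  [false, false, true, true, false, false, true, true, false],
  [true, false, false, true, true, false, false, true, true, false]]

set_option maxRecDepth 100000 in
lemma words_nodup : (words.map wprod).Nodup := by decide

set_option maxRecDepth 10000 in
lemma words_length : (words.map wprod).length = 60 := by decide

lemma wprod_mem (w : List Bool) : wprod w ∈ Subgroup.closure {p5, s5} := by
  apply Subgroup.list_prod_mem
  intro x hx
  obtain ⟨b, _, rfl⟩ := List.mem_map.1 hx
  cases b
  · exact Subgroup.subset_closure (Set.mem_insert_iff.2 (Or.inr rfl))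
  · exact Subgroup.subset_closure (Set.mem_insert_iff.2 (Or.inl rfl))

lemma card_closure_ge : 60 ≤ Nat.card (Subgroup.closure {p5, s5}) := by
  have hsub : ((words.map wprod).toFinset : Set (Equiv.Perm (Fin 5))) ⊆
      (Subgroup.closure {p5, s5} : Subgroup (Equiv.Perm (Fin 5))) := by
    intro x hx
    rw [Finset.mem_coe, List.mem_toFinset] at hx
    obtain ⟨w, _, rfl⟩ := List.mem_map.1 hx
    exact wprod_mem w
  have h1 : ((words.map wprod).toFinset : Set (Equiv.Perm (Fin 5))).ncard ≤
      ((Subgroup.closure {p5, s5} : Subgroup (Equiv.Perm (Fin 5))) :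
        Set (Equiv.Perm (Fin 5))).ncard :=
    Set.ncard_le_ncard hsub (Set.toFinite _)
  rw [Set.ncard_coe_finset, List.toFinset_card_of_nodup words_nodup, words_length] at h1
  exact le_trans h1 (le_of_eq (Nat.card_coe_set_eq _).symm)

lemma p5_mem : p5 ∈ alternatingGroup (Fin 5) := by
  rw [Equiv.Perm.mem_alternatingGroup]
  decide

lemma s5_mem : s5 ∈ alternatingGroup (Fin 5) := by
  rw [Equiv.Perm.mem_alternatingGroup]
  decide

lemma card_alt : Nat.card (alternatingGroup (Fin 5)) = 60 := by
  have h := @two_mul_card_alternatingGroup (Fin 5) _ _ _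
  rw [Fintype.card_perm, Fintype.card_fin] at h
  have h120 : Nat.factorial 5 = 120 := rfl
  rw [h120] at h
  rw [Nat.card_eq_fintype_card]
  omega

lemma closure_eq_alt : Subgroup.closure {p5, s5} = alternatingGroup (Fin 5) := by
  apply Subgroup.eq_of_le_of_card_ge
  · rw [Subgroup.closure_le]
    rintro x (rfl | rfl)
    · exact p5_mem
    · exact s5_mem
  · rw [card_alt]
    exact card_closure_ge

end G1A5Aux

/-- `𝒢₁ = ⟨P, S⟩` is isomorphic to the alternating group `A₅`. -/
theorem G1_iso_A5 :
    Nonempty ((Subgroup.closure {P, S} : Subgroup (Equiv.Perm (Fin 15))) ≃*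
      alternatingGroup (Fin 5)) := by
  refine ⟨((MulEquiv.subgroupCongr G1A5Aux.hr1).symm.trans
    (MonoidHom.ofInjective G1A5Aux.hinj1).symm).trans
    ((MonoidHom.ofInjective G1A5Aux.hinj2).trans
      (MulEquiv.subgroupCongr (G1A5Aux.hr2.trans G1A5Aux.closure_eq_alt)))⟩
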